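/- Let ⟨T, ⪯, i⟩ be an LCS poset of height δ with associated space X(T). Then X(T) is scattered and for every α < δ the α-th Cantor–Bendixson level of X(T) equals T_α. -/

import Mathlib

/-- An LCS poset on `T = ⋃_{α<δ} {α} × A_α` with infimum function `i`. -/
structure LCSPoset (δ : Ordinal.{0}) where
  /-- the levels -/
  A : Ordinal.{0} → Set Ordinal.{0}
  hA : ∀ α, α < δ → (A α).Nonempty
  /-- the partial order -/
  le : Ordinal.{0} × Ordinal.{0} → Ordinal.{0} × Ordinal.{0} → Prop
  le_refl : ∀ s, le s s
  le_trans : ∀ s t u, le s t → le t u → le s u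
  le_antisymm : ∀ s t, le s t → le t s → s = t
  /-- `s ≺ t` implies `π(s) < π(t)` -/
  pi_lt : ∀ s t, le s t → s ≠ t → s.1 < t.1
  /-- each point has infinitely many strict predecessors on each lower level -/
  many_below : ∀ α β, α < β → β < δ → ∀ t : Ordinal.{0} × Ordinal.{0},
    t.1 = β → t.2 ∈ A t.1 →
    {s : Ordinal.{0} × Ordinal.{0} |
      s.1 = α ∧ s.2 ∈ A s.1 ∧ le s t ∧ s ≠ t}.Infinite
  /-- the infimum function -/
  infl : Ordinal.{0} × Ordinal.{0} → Ordinal.{0} × Ordinal.{0} →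
    Finset (Ordinal.{0} × Ordinal.{0})
  infl_le : ∀ s t v, v ∈ infl s t → le v s ∧ le v t
  infl_ub : ∀ s t u, le u s → le u t → ∃ v ∈ infl s t, le u v

/-- The underlying set of the LCS poset. -/
def LCSPoset.carrier {δ : Ordinal.{0}} (P : LCSPoset δ) : Set (Ordinal.{0} × Ordinal.{0}) :=
  {p | p.1 < δ ∧ p.2 ∈ P.A p.1}

/-- The underlying type of the associated space. -/
def LCSPoset.space {δ : Ordinal.{0}} (P : LCSPoset δ) : Type 1 :=
  {p : Ordinal.{0} × Ordinal.{0} // p ∈ P.carrier}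

/-- The topology generated by the basic sets `C(x) \ (C(x₁) ∪ … ∪ C(x_n))`. -/
noncomputable def LCSPoset.topology {δ : Ordinal.{0}} (P : LCSPoset δ) :
    TopologicalSpace P.space :=
  TopologicalSpace.generateFrom
    {S | ∃ (x : P.space) (F : Finset (Ordinal.{0} × Ordinal.{0})),
      (∀ y ∈ F, P.le y x.1 ∧ y ≠ x.1) ∧
      S = {z : P.space | P.le z.1 x.1} \ ⋃ y ∈ F, {z : P.space | P.le z.1 y}}


/-- The `o`-th Cantor–Bendixson level. -/
noncomputable def CBLevel (X : Type*) [TopologicalSpace X] : Ordinal.{0} → Set X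
  | o =>
    {x | x ∉ (⋃ β : Set.Iio o, CBLevel X β.1) ∧
      ∃ U : Set X, IsOpen U ∧ U ∩ (⋃ β : Set.Iio o, CBLevel X β.1)ᶜ = {x}}
  termination_by o => o
  decreasing_by all_goals exact β.2


namespace LCSPoset

variable {δ : Ordinal.{0}} (P : LCSPoset δ)

/-- The generating family of the topology. -/
def gens (P : LCSPoset δ) : Set (Set P.space) :=
  {S | ∃ (x : P.space) (F : Finset (Ordinal.{0} × Ordinal.{0})),
    (∀ y ∈ F, P.le y x.1 ∧ y ≠ x.1) ∧
    S = {z : P.space | P.le z.1 x.1} \ ⋃ y ∈ F, {z : P.space | P.le z.1 y}}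

lemma isOpen_basic (x : P.space) (F : Finset (Ordinal.{0} × Ordinal.{0}))
    (hF : ∀ y ∈ F, P.le y x.1 ∧ y ≠ x.1) :
    @IsOpen P.space P.topology
      ({z : P.space | P.le z.1 x.1} \ ⋃ y ∈ F, {z : P.space | P.le z.1 y}) :=
  TopologicalSpace.GenerateOpen.basic _ ⟨x, F, hF, rfl⟩

lemma isOpen_cone (x : P.space) :
    @IsOpen P.space P.topology {z : P.space | P.le z.1 x.1} := by
  have h := P.isOpen_basic x ∅ (by simp)
  simpa using h

lemma nhds_basis {U : Set P.space} (hU : @IsOpen P.space P.topology U) (z : P.space)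
    (hz : z ∈ U) :
    ∃ F : Finset (Ordinal.{0} × Ordinal.{0}), (∀ v ∈ F, P.le v z.1 ∧ v ≠ z.1) ∧
      {w : P.space | P.le w.1 z.1} \ (⋃ v ∈ F, {w : P.space | P.le w.1 v}) ⊆ U := by
  have hU' : TopologicalSpace.GenerateOpen P.gens U := hU
  clear hU
  revert hz
  induction hU' with
  | basic S hS =>
      intro hz
      obtain ⟨x, F, hF, rfl⟩ := hS
      obtain ⟨hzx, hznot⟩ := hz
      simp only [Set.mem_iUnion, Set.mem_setOf_eq, not_exists] at hznot
      refine ⟨F.biUnion (fun y => P.infl z.1 y), ?_, ?_⟩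
      · intro v hv
        rw [Finset.mem_biUnion] at hv
        obtain ⟨y, hy, hvy⟩ := hv
        have h1 := P.infl_le z.1 y v hvy
        refine ⟨h1.1, ?_⟩
        rintro rfl
        exact hznot y hy h1.2
      · rintro w ⟨hw1, hw2⟩
        refine ⟨P.le_trans _ _ _ hw1 hzx, ?_⟩
        intro hmem
        simp only [Set.mem_iUnion, Set.mem_setOf_eq] at hmem
        obtain ⟨y, hy, hwy⟩ := hmem
        obtain ⟨v, hv, hwv⟩ := P.infl_ub z.1 y w.1 hw1 hwy
        apply hw2
        simp only [Set.mem_iUnion, Set.mem_setOf_eq, Finset.mem_biUnion]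
        exact ⟨v, ⟨y, hy, hv⟩, hwv⟩
  | univ =>
      intro _
      exact ⟨∅, by simp, fun w _ => trivial⟩
  | inter s t _ _ ihs iht =>
      intro hz
      obtain ⟨F1, hF1, hsub1⟩ := ihs hz.1
      obtain ⟨F2, hF2, hsub2⟩ := iht hz.2
      refine ⟨F1 ∪ F2, ?_, ?_⟩
      · intro v hv
        rcases Finset.mem_union.1 hv with h | h
        · exact hF1 v h
        · exact hF2 v h
      · rintro w ⟨hw1, hw2⟩
        simp only [Set.mem_iUnion, Set.mem_setOf_eq, not_exists, Finset.mem_union] at hw2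
        constructor
        · apply hsub1
          refine ⟨hw1, ?_⟩
          simp only [Set.mem_iUnion, Set.mem_setOf_eq, not_exists]
          intro v hv
          exact hw2 v (Or.inl hv)
        · apply hsub2
          refine ⟨hw1, ?_⟩
          simp only [Set.mem_iUnion, Set.mem_setOf_eq, not_exists]
          intro v hv
          exact hw2 v (Or.inr hv)
  | sUnion S _ ih =>
      intro hz
      obtain ⟨t, ht, hzt⟩ := hz
      obtain ⟨F, h1, h2⟩ := ih t ht hzt
      exact ⟨F, h1, fun w hw => Set.mem_sUnion.2 ⟨t, ht, h2 hw⟩⟩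

end LCSPoset

/-- The space associated with an LCS poset of height `δ` is scattered and its
`α`-th Cantor–Bendixson level is exactly `T_α`, for every `α < δ`. -/
theorem LCSPoset.scattered_and_levels {δ : Ordinal.{0}} (P : LCSPoset δ) :
    (∀ S : Set P.space, S.Nonempty →
      ∃ x ∈ S, ∃ U : Set P.space, @IsOpen P.space P.topology U ∧ U ∩ S = {x}) ∧
    (∀ α, α < δ → @CBLevel P.space P.topology α = {z : P.space | z.1.1 = α}) := by
    constructor
    · -- scattered
      intro S hS
      have hL : {o : Ordinal.{0} | ∃ z ∈ S, z.1.1 = o}.Nonempty :=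
        ⟨hS.some.1.1, hS.some, hS.some_mem, rfl⟩
      obtain ⟨o, ⟨x, hxS, hxo⟩, hmin⟩ :=
        Ordinal.lt_wf.has_min {o : Ordinal.{0} | ∃ z ∈ S, z.1.1 = o} hL
      refine ⟨x, hxS, {w : P.space | P.le w.1 x.1}, P.isOpen_cone x, ?_⟩
      ext w
      simp only [Set.mem_inter_iff, Set.mem_setOf_eq, Set.mem_singleton_iff]
      constructor
      · rintro ⟨hw1, hw2⟩
        rcases eq_or_ne w.1 x.1 with h | h
        · exact Subtype.ext h
        · have hlt := P.pi_lt w.1 x.1 hw1 h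
          rw [hxo] at hlt
          exact absurd hlt (hmin w.1.1 ⟨w, hw2, rfl⟩)
      · rintro rfl
        exact ⟨P.le_refl _, hxS⟩
    · -- CB levels
      intro α
      induction α using Ordinal.induction with
      | h α IH =>
        intro hα
        have hD : (⋃ β : Set.Iio α, @CBLevel P.space P.topology β.1) =
            {z : P.space | z.1.1 < α} := by
          ext z
          simp only [Set.mem_iUnion, Set.mem_setOf_eq]
          constructor
          · rintro ⟨⟨β, hβ⟩, hz⟩
            rw [IH β hβ (hβ.trans hα)] at hz
            exact hz ▸ hβ
          · intro h
            exact ⟨⟨z.1.1, h⟩, by rw [IH _ h (h.trans hα)]; rfl⟩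
        rw [CBLevel, hD]
        ext z
        simp only [Set.mem_setOf_eq]
        constructor
        · rintro ⟨hz1, U, hU, hUeq⟩
          by_contra hne
          have hge : α ≤ z.1.1 := not_lt.1 hz1
          have hgt : α < z.1.1 := lt_of_le_of_ne hge (Ne.symm hne)
          have hzU : z ∈ U := by
            have hzz : z ∈ ({z} : Set P.space) := rfl
            rw [← hUeq] at hzz
            exact hzz.1
          obtain ⟨F, hF, hsub⟩ := P.nhds_basis hU z hzU
          set β := max (F.sup Prod.fst) α with hβdef
          have hβlt : β < z.1.1 := by
            apply max_lt _ hgt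
            apply (Finset.sup_lt_iff (bot_le.trans_lt hgt)).2
            intro v hv
            exact P.pi_lt v z.1 (hF v hv).1 (hF v hv).2
          have hinf := P.many_below β z.1.1 hβlt z.2.1 z.1 rfl z.2.2
          have hinf2 := hinf.diff F.finite_toSet
          obtain ⟨s, hsmem, hsF⟩ := hinf2.nonempty
          obtain ⟨hs1, hs2, hs3, hs4⟩ := hsmem
          have hsδ : s ∈ P.carrier := ⟨by rw [hs1]; exact hβlt.trans z.2.1, hs2⟩
          have hwU : (⟨s, hsδ⟩ : P.space) ∈ U := by
            apply hsub
            refine ⟨hs3, ?_⟩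
            intro hmem
            replace hmem := Set.mem_iUnion₂.1 hmem
            obtain ⟨v, hv, hwv⟩ := hmem
            rcases eq_or_ne s v with rfl | hne2
            · exact hsF hv
            · have hlt2 := P.pi_lt s v hwv hne2
              have hvβ : v.1 ≤ β := le_max_of_le_left (Finset.le_sup hv)
              rw [hs1] at hlt2
              exact absurd (hlt2.trans_le hvβ) (lt_irrefl β)
          have hwmem : (⟨s, hsδ⟩ : P.space) ∈ U ∩ {w : P.space | w.1.1 < α}ᶜ := by
            refine ⟨hwU, ?_⟩
            refine not_lt.2 (?_ : α ≤ s.1)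
            rw [hs1]
            exact le_max_right _ _
          rw [hUeq] at hwmem
          replace hwmem : (⟨s, hsδ⟩ : P.space) = z := hwmem
          exact hs4 (congrArg Subtype.val hwmem)
        · intro hz
          refine ⟨by simp [hz], {w : P.space | P.le w.1 z.1}, P.isOpen_cone z, ?_⟩
          ext w
          simp only [Set.mem_inter_iff, Set.mem_setOf_eq, Set.mem_compl_iff,
            Set.mem_singleton_iff, not_lt]
          constructor
          · rintro ⟨hw1, hw2⟩
            rcases eq_or_ne w.1 z.1 with h | h
            · exact Subtype.ext h
            · have hlt := P.pi_lt w.1 z.1 hw1 h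
              rw [hz] at hlt
              exact absurd hlt (not_lt.2 hw2)
          · rintro rfl
            exact ⟨P.le_refl _, hz.ge⟩
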